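/- Let p₁ = p_{1R} + i p_{1I}, p₂ = p_{2R} + i p_{2I} ∈ ℂ with p_{1R} > 0, p_{2R} > 0, p_{1I} ≠ 0, p_{2I} ≠ 0, |p₁| < |p₂|, p₁ + p₂ ≠ 0, p₁ + conj(p₂) ≠ 0, p₂ + conj(p₁) ≠ 0, and p₁⁻² ≠ conj(p₂)⁻². Let α_j⁽¹⁾, α_j⁽²⁾ ∈ ℂ (j = 1,2) with (α₁⁽¹⁾, α₁⁽²⁾) ≠ (0,0). Define η_j(y,s) = p_j y + s/p_j, P₁₂ = (p₁−p₂)/(p₁+p₂), P_{i j̄} = (p_i − conj(p_j))/(p_i + conj(p_j)), B_{i j̄} = (α_i⁽¹⁾ conj(α_j⁽¹⁾) + α_i⁽²⁾ conj(α_j⁽²⁾))/(4(p_i⁻² − conj(p_j)⁻²)), e^{r_{i j̄}} = (α_i⁽¹⁾ conj(α_j⁽¹⁾) + α_i⁽²⁾ conj(α_j⁽²⁾))/(4(p_i⁻¹ + conj(p_j)⁻¹)²), and the two-soliton tau functions f = 1 + e^{η₁+conj(η₁)+r_{11̄}} + e^{η₁+conj(η₂)+r_{12̄}} + e^{η₂+conj(η₁)+r_{21̄}}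 + e^{η₂+conj(η₂)+r_{22̄}} + |P₁₂|²|P_{12̄}|² P_{11̄} P_{22̄} (B_{11̄}B_{22̄} − B_{21̄}B_{12̄}) e^{η₁+η₂+conj(η₁)+conj(η₂)} and g_i = α₁⁽ⁱ⁾ e^{η₁} + α₂⁽ⁱ⁾ e^{η₂} + P₁₂ P_{11̄} P_{21̄}(α₂⁽ⁱ⁾ B_{11̄} − α₁⁽ⁱ⁾ B_{21̄}) e^{η₁+η₂+conj(η₁)} + P₁₂ P_{12̄} P_{22̄}(α₂⁽ⁱ⁾ B_{12̄} − α₁⁽ⁱ⁾ B_{22̄}) e^{η₁+η₂+conj(η₂)} (i = 1,2). Fix ξ ∈ ℝ and set y(s) = ξ/p_{1R} − s/|p₁|², η_{1I}(s) = p_{1I}(y(s) − s/|p₁|²), and r_{11̄} = log((|α₁⁽¹⁾|² + |α₁⁽²⁾|²)|p₁|⁴/(4(p₁+conj(p₁))²)) ∈ ℝ. Then for i = 1,2, as s → +∞, e^{−i η_{1I}(s)} · g_i(y(s), s)/f(y(s), s) converges to (α₁⁽ⁱ⁾/√(|α₁⁽¹⁾|² + |α₁⁽²⁾|²)) · (2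 p_{1R}/|p₁|²) · sech(ξ + r_{11̄}/2). -/

import Mathlib

open Complex Filter

/-- `sech u = 2/(e^u + e^{−u})`. -/
noncomputable def sech (u : ℝ) : ℝ := 2 / (Real.exp u + Real.exp (-u))


private lemma ccsp_aux_vanish {h : ℝ → ℂ} (H : Filter.Tendsto (fun s => (h s).re) Filter.atTop Filter.atBot) :
    Filter.Tendsto (fun s => Complex.exp (h s)) Filter.atTop (nhds 0) := by
  rw [tendsto_zero_iff_norm_tendsto_zero]
  exact (Real.tendsto_exp_atBot.comp H).congr fun s => by simp [Function.comp, Complex.norm_exp]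

private lemma ccsp_aux_sech (p1R D1 A2 ξ r11 : ℝ) (hp1R : 0 < p1R) (hD1 : 0 < D1) (hA2 : 0 < A2)
    (hr11 : r11 = Real.log (A2 * D1^2 / (4 * (2*p1R)^2))) :
    Real.exp ξ / (1 + (A2 * D1^2/(16*p1R^2)) * Real.exp (2*ξ))
      = (Real.sqrt A2)⁻¹ * (2*p1R/D1) * sech (ξ + r11/2) := by
  have hA := Real.sqrt_pos.mpr hA2
  have hAsq : Real.sqrt A2 ^ 2 = A2 := Real.sq_sqrt hA2.le
  have hexp_r11 : Real.exp r11 = A2 * D1^2/(16*p1R^2) := by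
    rw [hr11, Real.exp_log (by positivity)]; ring
  have hhalf : Real.exp (r11/2) = Real.sqrt A2 * D1 / (4*p1R) := by
    have h3 : (0:ℝ) < Real.exp (r11/2) := Real.exp_pos _
    have h4 : (0:ℝ) < Real.sqrt A2 * D1/(4*p1R) := by positivity
    have h2 : (Real.exp (r11/2))^2 = (Real.sqrt A2 * D1/(4*p1R))^2 := by
      rw [sq, ← Real.exp_add]
      have : r11/2 + r11/2 = r11 := by ring
      rw [this, hexp_r11]
      field_simp
      linear_combination (-16) * hAsq
    calc Real.exp (r11/2) = Real.sqrt ((Real.exp (r11/2))^2) := (Real.sqrt_sq h3.le).symm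
      _ = Real.sqrt ((Real.sqrt A2 * D1/(4*p1R))^2) := by rw [h2]
      _ = _ := Real.sqrt_sq h4.le
  unfold sech
  have hE : Real.exp (ξ + r11/2) = Real.exp ξ * (Real.sqrt A2 * D1/(4*p1R)) := by
    rw [Real.exp_add, hhalf]
  have hEn : Real.exp (-(ξ + r11/2)) = (Real.exp ξ * (Real.sqrt A2 * D1/(4*p1R)))⁻¹ := by
    rw [Real.exp_neg, hE]
  rw [hE, hEn]
  have he : (0:ℝ) < Real.exp ξ := Real.exp_pos _
  have h2ξ : Real.exp (2*ξ) = Real.exp ξ ^ 2 := by rw [sq, ← Real.exp_add]; ring_nf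
  rw [h2ξ]
  field_simp
  linear_combination (16 * Real.exp ξ^2 * D1^2) * hAsq

set_option maxHeartbeats 2000000 in
/-- Asymptotic form of soliton 1 of the CCSP two-soliton solution before the collision:
along the line `η_{1R} = ξ`, as `s → +∞` (i.e. `t → −∞`), `e^{−i η_{1I}} g_i/f`
converges to `(α₁⁽ⁱ⁾/√(|α₁⁽¹⁾|²+|α₁⁽²⁾|²)) (2p_{1R}/|p₁|²) sech(ξ + r_{11̄}/2)`. -/
theorem ccsp_two_soliton_asymptotics
    (p1R p1I p2R p2I : ℝ) (hp1R : 0 < p1R) (hp2R : 0 < p2R)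
    (hp1I : p1I ≠ 0) (hp2I : p2I ≠ 0)
    (p₁ p₂ : ℂ) (hp₁ : p₁ = ⟨p1R, p1I⟩) (hp₂ : p₂ = ⟨p2R, p2I⟩)
    (habs : ‖p₁‖ < ‖p₂‖)
    (hsum : p₁ + p₂ ≠ 0) (hsum₁ : p₁ + starRingEnd ℂ p₂ ≠ 0)
    (hsum₂ : p₂ + starRingEnd ℂ p₁ ≠ 0)
    (hinv : (p₁⁻¹)^2 ≠ ((starRingEnd ℂ p₂)⁻¹)^2)
    (α₁c₁ α₁c₂ α₂c₁ α₂c₂ : ℂ) (hα₁ : ¬(α₁c₁ = 0 ∧ α₁c₂ = 0))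
    (η₁ η₂ : ℝ → ℝ → ℂ)
    (hη₁ : ∀ y s, η₁ y s = p₁ * (y : ℂ) + (s : ℂ) / p₁)
    (hη₂ : ∀ y s, η₂ y s = p₂ * (y : ℂ) + (s : ℂ) / p₂)
    (P12 P11b P12b P21b P22b : ℂ)
    (hP12 : P12 = (p₁ - p₂) / (p₁ + p₂))
    (hP11b : P11b = (p₁ - starRingEnd ℂ p₁) / (p₁ + starRingEnd ℂ p₁))
    (hP12b : P12b = (p₁ - starRingEnd ℂ p₂) / (p₁ + starRingEnd ℂ p₂))
    (hP21b : P21b = (p₂ - starRingEnd ℂ p₁) / (p₂ + starRingEnd ℂ p₁))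
    (hP22b : P22b = (p₂ - starRingEnd ℂ p₂) / (p₂ + starRingEnd ℂ p₂))
    (B11b B12b B21b B22b : ℂ)
    (hB11b : B11b = (α₁c₁ * starRingEnd ℂ α₁c₁ + α₁c₂ * starRingEnd ℂ α₁c₂)
      / (4 * ((p₁⁻¹)^2 - ((starRingEnd ℂ p₁)⁻¹)^2)))
    (hB12b : B12b = (α₁c₁ * starRingEnd ℂ α₂c₁ + α₁c₂ * starRingEnd ℂ α₂c₂)
      / (4 * ((p₁⁻¹)^2 - ((starRingEnd ℂ p₂)⁻¹)^2)))
    (hB21b : B21b = (α₂c₁ * starRingEnd ℂ α₁c₁ + α₂c₂ * starRingEnd ℂ α₁c₂)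
      / (4 * ((p₂⁻¹)^2 - ((starRingEnd ℂ p₁)⁻¹)^2)))
    (hB22b : B22b = (α₂c₁ * starRingEnd ℂ α₂c₁ + α₂c₂ * starRingEnd ℂ α₂c₂)
      / (4 * ((p₂⁻¹)^2 - ((starRingEnd ℂ p₂)⁻¹)^2)))
    (E11 E12 E21 E22 : ℂ)
    (hE11 : E11 = (α₁c₁ * starRingEnd ℂ α₁c₁ + α₁c₂ * starRingEnd ℂ α₁c₂)
      / (4 * (p₁⁻¹ + (starRingEnd ℂ p₁)⁻¹)^2))
    (hE12 : E12 = (α₁c₁ * starRingEnd ℂ α₂c₁ + α₁c₂ * starRingEnd ℂ α₂c₂)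
      / (4 * (p₁⁻¹ + (starRingEnd ℂ p₂)⁻¹)^2))
    (hE21 : E21 = (α₂c₁ * starRingEnd ℂ α₁c₁ + α₂c₂ * starRingEnd ℂ α₁c₂)
      / (4 * (p₂⁻¹ + (starRingEnd ℂ p₁)⁻¹)^2))
    (hE22 : E22 = (α₂c₁ * starRingEnd ℂ α₂c₁ + α₂c₂ * starRingEnd ℂ α₂c₂)
      / (4 * (p₂⁻¹ + (starRingEnd ℂ p₂)⁻¹)^2))
    (f g₁ g₂ : ℝ → ℝ → ℂ)
    (hf : ∀ y s, f y s = 1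
      + E11 * Complex.exp (η₁ y s + starRingEnd ℂ (η₁ y s))
      + E12 * Complex.exp (η₁ y s + starRingEnd ℂ (η₂ y s))
      + E21 * Complex.exp (η₂ y s + starRingEnd ℂ (η₁ y s))
      + E22 * Complex.exp (η₂ y s + starRingEnd ℂ (η₂ y s))
      + (‖P12‖ : ℂ)^2 * (‖P12b‖ : ℂ)^2 * P11b * P22b
          * (B11b * B22b - B21b * B12b)
          * Complex.exp (η₁ y s + η₂ y s + starRingEnd ℂ (η₁ y s) + starRingEnd ℂ (η₂ y s)))
    (hg₁ : ∀ y s, g₁ y s = α₁c₁ * Complex.exp (η₁ y s) + α₂c₁ * Complex.exp (η₂ y s)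
      + P12 * P11b * P21b * (α₂c₁ * B11b - α₁c₁ * B21b)
          * Complex.exp (η₁ y s + η₂ y s + starRingEnd ℂ (η₁ y s))
      + P12 * P12b * P22b * (α₂c₁ * B12b - α₁c₁ * B22b)
          * Complex.exp (η₁ y s + η₂ y s + starRingEnd ℂ (η₂ y s)))
    (hg₂ : ∀ y s, g₂ y s = α₁c₂ * Complex.exp (η₁ y s) + α₂c₂ * Complex.exp (η₂ y s)
      + P12 * P11b * P21b * (α₂c₂ * B11b - α₁c₂ * B21b)
          * Complex.exp (η₁ y s + η₂ y s + starRingEnd ℂ (η₁ y s))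
      + P12 * P12b * P22b * (α₂c₂ * B12b - α₁c₂ * B22b)
          * Complex.exp (η₁ y s + η₂ y s + starRingEnd ℂ (η₂ y s)))
    (ξ : ℝ)
    (yline : ℝ → ℝ) (hyline : ∀ s, yline s = ξ / p1R - s / (p1R^2 + p1I^2))
    (η1I : ℝ → ℝ) (hη1I : ∀ s, η1I s = p1I * (yline s - s / (p1R^2 + p1I^2)))
    (r11 : ℝ)
    (hr11 : r11 = Real.log (((‖α₁c₁‖)^2 + (‖α₁c₂‖)^2)
      * (p1R^2 + p1I^2)^2 / (4 * (2 * p1R)^2))) :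
    Tendsto (fun s => Complex.exp (-(Complex.I * (η1I s : ℂ)))
        * (g₁ (yline s) s / f (yline s) s)) atTop
      (nhds ((α₁c₁ / ((Real.sqrt ((‖α₁c₁‖)^2 + (‖α₁c₂‖)^2) : ℝ) : ℂ))
        * ((2 * p1R / (p1R^2 + p1I^2) : ℝ) : ℂ)
        * ((sech (ξ + r11 / 2) : ℝ) : ℂ)))
    ∧
    Tendsto (fun s => Complex.exp (-(Complex.I * (η1I s : ℂ)))
        * (g₂ (yline s) s / f (yline s) s)) atTop
      (nhds ((α₁c₂ / ((Real.sqrt ((‖α₁c₁‖)^2 + (‖α₁c₂‖)^2) : ℝ) : ℂ))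
        * ((2 * p1R / (p1R^2 + p1I^2) : ℝ) : ℂ)
        * ((sech (ξ + r11 / 2) : ℝ) : ℂ))) := by
  subst hp₁
  subst hp₂
  have hD1 : (0:ℝ) < p1R^2 + p1I^2 := by positivity
  have hD2 : (0:ℝ) < p2R^2 + p2I^2 := by positivity
  have hDD1' : (0:ℝ) < p1R*p1R + p1I*p1I := by nlinarith
  have hDD2' : (0:ℝ) < p2R*p2R + p2I*p2I := by nlinarith
  have hDD1 : p1R*p1R + p1I*p1I ≠ 0 := hDD1'.ne'
  have hDD2 : p2R*p2R + p2I*p2I ≠ 0 := hDD2'.ne'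
  have hA2pos : (0:ℝ) < (‖α₁c₁‖)^2 + (‖α₁c₂‖)^2 := by
    rcases not_and_or.mp hα₁ with h | h
    · have := norm_pos_iff.mpr h
      have h2 := sq_nonneg (‖α₁c₂‖)
      nlinarith
    · have := norm_pos_iff.mpr h
      have h2 := sq_nonneg (‖α₁c₁‖)
      nlinarith
  have hns1 : Complex.normSq (⟨p1R,p1I⟩:ℂ) = p1R^2+p1I^2 := by
    simp [Complex.normSq_mk]; ring
  have hns2 : Complex.normSq (⟨p2R,p2I⟩:ℂ) = p2R^2+p2I^2 := by
    simp [Complex.normSq_mk]; ring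
  have hD12 : p1R^2+p1I^2 < p2R^2+p2I^2 := by
    have h := mul_self_lt_mul_self (norm_nonneg _) habs
    rwa [← sq, ← sq, ← Complex.normSq_eq_norm_sq, ← Complex.normSq_eq_norm_sq, hns1, hns2] at h
  -- η₁ along the line
  have hη1line : ∀ s, η₁ (yline s) s = (ξ:ℂ) + Complex.I * ((η1I s : ℝ):ℂ) := by
    intro s
    rw [hη₁, hη1I s, hyline s]
    apply Complex.ext <;>
    · simp only [Complex.add_re, Complex.add_im, Complex.mul_re, Complex.mul_im,
        Complex.div_re, Complex.div_im, Complex.normSq_mk, Complex.ofReal_re, Complex.ofReal_im,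
        Complex.I_re, Complex.I_im]
      field_simp [hp1R.ne', hD1.ne', hDD1]
      ring
  have hre1 : ∀ s, (η₁ (yline s) s).re = ξ := by
    intro s
    rw [hη1line s]
    simp
  -- real part of η₂ along the line
  have hre2 : ∀ s, (η₂ (yline s) s).re
      = p2R*ξ/p1R + s * (p2R/(p2R^2+p2I^2) - p2R/(p1R^2+p1I^2)) := by
    intro s
    rw [hη₂, hyline s]
    simp only [Complex.add_re, Complex.mul_re, Complex.div_re, Complex.normSq_mk,
      Complex.ofReal_re, Complex.ofReal_im]
    field_simp [hp1R.ne', hD1.ne', hD2.ne', hDD1, hDD2]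
    ring
  have hslope : p2R/(p2R^2+p2I^2) - p2R/(p1R^2+p1I^2) < 0 := by
    have h := div_lt_div_of_pos_left hp2R hD1 hD12
    linarith
  have hRe2 : Tendsto (fun s => (η₂ (yline s) s).re) atTop atBot := by
    have h1 : Tendsto (fun s : ℝ => p2R*ξ/p1R + s * (p2R/(p2R^2+p2I^2) - p2R/(p1R^2+p1I^2)))
        atTop atBot :=
      tendsto_atBot_add_const_left atTop _ (tendsto_id.atTop_mul_const_of_neg hslope)
    exact h1.congr fun s => (hre2 s).symm
  -- atBot building blocks
  have hb1 : Tendsto (fun s => ξ + (η₂ (yline s) s).re) atTop atBot :=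
    tendsto_atBot_add_const_left atTop _ hRe2
  have hb2 : Tendsto (fun s => (η₂ (yline s) s).re + (η₂ (yline s) s).re) atTop atBot :=
    Filter.Tendsto.atBot_add_atBot hRe2 hRe2
  have hb3 : Tendsto (fun s => 2*ξ + (η₂ (yline s) s).re) atTop atBot :=
    tendsto_atBot_add_const_left atTop _ hRe2
  have hb4 : Tendsto (fun s => ξ + ((η₂ (yline s) s).re + (η₂ (yline s) s).re)) atTop atBot :=
    tendsto_atBot_add_const_left atTop _ hb2
  have hb5 : Tendsto (fun s => 2*ξ + ((η₂ (yline s) s).re + (η₂ (yline s) s).re)) atTop atBot :=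
    tendsto_atBot_add_const_left atTop _ hb2
  -- exp(η₁ + conj η₁) is constant
  have hexp11 : ∀ s, Complex.exp (η₁ (yline s) s + starRingEnd ℂ (η₁ (yline s) s))
      = ((Real.exp (2*ξ) : ℝ):ℂ) := by
    intro s
    rw [hη1line s]
    rw [show starRingEnd ℂ ((ξ:ℂ) + Complex.I * ((η1I s:ℝ):ℂ))
        = (ξ:ℂ) - Complex.I * ((η1I s:ℝ):ℂ) by
      simp [map_add, map_mul, Complex.conj_I, Complex.conj_ofReal]; ring]
    rw [show ((ξ:ℂ) + Complex.I * ((η1I s:ℝ):ℂ)) + ((ξ:ℂ) - Complex.I * ((η1I s:ℝ):ℂ))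
        = (((2*ξ:ℝ)):ℂ) by push_cast; ring]
    rw [← Complex.ofReal_exp]
  -- E11 is a positive real constant
  have hE11R : E11 = ((((‖α₁c₁‖)^2 + (‖α₁c₂‖)^2)
      * (p1R^2+p1I^2)^2 / (16*p1R^2) : ℝ) : ℂ) := by
    have hsum11 : ((⟨p1R,p1I⟩:ℂ))⁻¹ + (starRingEnd ℂ (⟨p1R,p1I⟩:ℂ))⁻¹
        = ((2*p1R/(p1R^2+p1I^2) : ℝ) : ℂ) := by
      rw [Complex.inv_def, Complex.inv_def, Complex.normSq_conj, hns1]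
      have hadd : (⟨p1R,p1I⟩:ℂ) + starRingEnd ℂ (⟨p1R,p1I⟩:ℂ) = ((2*p1R:ℝ):ℂ) := by
        rw [Complex.add_conj]
      rw [Complex.conj_conj]
      push_cast
      rw [← add_mul]
      push_cast at hadd
      rw [add_comm, hadd]
      ring
    rw [hE11, hsum11, Complex.mul_conj, Complex.mul_conj, Complex.normSq_eq_norm_sq,
      Complex.normSq_eq_norm_sq]
    have h1 : (p1R:ℂ) ≠ 0 := by exact_mod_cast hp1R.ne'
    have h2 : ((p1R^2+p1I^2 : ℝ):ℂ) ≠ 0 := by exact_mod_cast hD1.ne'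
    push_cast
    push_cast at h2
    field_simp
    ring
  -- limit of the denominator
  have hFLpos : (0:ℝ) < 1 + (((‖α₁c₁‖)^2 + (‖α₁c₂‖)^2)
      * (p1R^2+p1I^2)^2 / (16*p1R^2)) * Real.exp (2*ξ) := by positivity
  have hFLne : (((1 + (((‖α₁c₁‖)^2 + (‖α₁c₂‖)^2)
      * (p1R^2+p1I^2)^2 / (16*p1R^2)) * Real.exp (2*ξ) : ℝ)):ℂ) ≠ 0 := by
    exact_mod_cast hFLpos.ne'
  have hT12 : Tendsto (fun s => Complex.exp (η₁ (yline s) s + starRingEnd ℂ (η₂ (yline s) s)))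
      atTop (nhds 0) := by
    apply ccsp_aux_vanish
    exact hb1.congr fun s => by simp [Complex.add_re, Complex.conj_re, hre1 s]
  have hT21 : Tendsto (fun s => Complex.exp (η₂ (yline s) s + starRingEnd ℂ (η₁ (yline s) s)))
      atTop (nhds 0) := by
    apply ccsp_aux_vanish
    exact hb1.congr fun s => by simp [Complex.add_re, Complex.conj_re, hre1 s, add_comm]
  have hT22 : Tendsto (fun s => Complex.exp (η₂ (yline s) s + starRingEnd ℂ (η₂ (yline s) s)))
      atTop (nhds 0) := by
    apply ccsp_aux_vanish
    exact hb2.congr fun s => by simp [Complex.add_re, Complex.conj_re]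
  have hTlast : Tendsto (fun s => Complex.exp (η₁ (yline s) s + η₂ (yline s) s
      + starRingEnd ℂ (η₁ (yline s) s) + starRingEnd ℂ (η₂ (yline s) s))) atTop (nhds 0) := by
    apply ccsp_aux_vanish
    refine hb5.congr fun s => ?_
    simp [Complex.add_re, Complex.conj_re, hre1 s]
    ring
  have hF : Tendsto (fun s => f (yline s) s) atTop
      (nhds (((1 + (((‖α₁c₁‖)^2 + (‖α₁c₂‖)^2)
        * (p1R^2+p1I^2)^2 / (16*p1R^2)) * Real.exp (2*ξ) : ℝ)):ℂ)) := by
    have h2 : Tendsto (fun s => E11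
        * Complex.exp (η₁ (yline s) s + starRingEnd ℂ (η₁ (yline s) s))) atTop
        (nhds (E11 * ((Real.exp (2*ξ) : ℝ):ℂ))) :=
      tendsto_const_nhds.congr fun s => by rw [hexp11 s]
    have h3 := hT12.const_mul E12
    have h4 := hT21.const_mul E21
    have h5 := hT22.const_mul E22
    have h6 := hTlast.const_mul ((‖P12‖ : ℂ)^2 * (‖P12b‖ : ℂ)^2
      * P11b * P22b * (B11b * B22b - B21b * B12b))
    have hsum := (((((tendsto_const_nhds (x := (1:ℂ))).add h2).add h3).add h4).add h5).add h6
    rw [mul_zero, mul_zero, mul_zero, mul_zero, add_zero, add_zero, add_zero, add_zero] at hsum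
    have hval : (1:ℂ) + E11 * ((Real.exp (2*ξ) : ℝ):ℂ)
        = (((1 + (((‖α₁c₁‖)^2 + (‖α₁c₂‖)^2)
          * (p1R^2+p1I^2)^2 / (16*p1R^2)) * Real.exp (2*ξ) : ℝ)):ℂ) := by
      rw [hE11R]; push_cast; ring
    rw [hval] at hsum
    exact hsum.congr fun s => (hf (yline s) s).symm
  -- atBot tendstos for the numerator terms
  have hg2re : Tendsto (fun s => (-(Complex.I * ((η1I s : ℝ):ℂ)) + η₂ (yline s) s).re)
      atTop atBot := by
    refine hRe2.congr fun s => ?_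
    simp [Complex.add_re]
  have hg3re : Tendsto (fun s => (-(Complex.I * ((η1I s : ℝ):ℂ)) + (η₁ (yline s) s
      + η₂ (yline s) s + starRingEnd ℂ (η₁ (yline s) s))).re) atTop atBot := by
    refine hb3.congr fun s => ?_
    simp [Complex.add_re, Complex.conj_re, hre1 s]
    ring
  have hg4re : Tendsto (fun s => (-(Complex.I * ((η1I s : ℝ):ℂ)) + (η₁ (yline s) s
      + η₂ (yline s) s + starRingEnd ℂ (η₂ (yline s) s))).re) atTop atBot := by
    refine hb4.congr fun s => ?_
    simp [Complex.add_re, Complex.conj_re, hre1 s]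
    ring
  -- the real limit identity
  have hreal : Real.exp ξ / (1 + (((‖α₁c₁‖)^2 + (‖α₁c₂‖)^2)
      * (p1R^2+p1I^2)^2/(16*p1R^2)) * Real.exp (2*ξ))
      = (Real.sqrt ((‖α₁c₁‖)^2 + (‖α₁c₂‖)^2))⁻¹
        * (2*p1R/(p1R^2+p1I^2)) * sech (ξ + r11/2) :=
    ccsp_aux_sech p1R (p1R^2+p1I^2) _ ξ r11 hp1R hD1 hA2pos hr11
  have key : ∀ (a b C₁ C₂ : ℂ) (g : ℝ → ℝ → ℂ),
      (∀ y s, g y s = a * Complex.exp (η₁ y s) + b * Complex.exp (η₂ y s)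
        + C₁ * Complex.exp (η₁ y s + η₂ y s + starRingEnd ℂ (η₁ y s))
        + C₂ * Complex.exp (η₁ y s + η₂ y s + starRingEnd ℂ (η₂ y s))) →
      Tendsto (fun s => Complex.exp (-(Complex.I * (η1I s : ℂ)))
          * (g (yline s) s / f (yline s) s)) atTop
        (nhds ((a / ((Real.sqrt ((‖α₁c₁‖)^2 + (‖α₁c₂‖)^2) : ℝ) : ℂ))
          * ((2 * p1R / (p1R^2 + p1I^2) : ℝ) : ℂ) * ((sech (ξ + r11 / 2) : ℝ) : ℂ))) := by
    intro a b C₁ C₂ g hg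
    have hgs : ∀ s, Complex.exp (-(Complex.I * ((η1I s : ℝ):ℂ))) * g (yline s) s
        = a * Complex.exp (-(Complex.I * ((η1I s:ℝ):ℂ)) + η₁ (yline s) s)
        + b * Complex.exp (-(Complex.I * ((η1I s:ℝ):ℂ)) + η₂ (yline s) s)
        + C₁ * Complex.exp (-(Complex.I * ((η1I s:ℝ):ℂ)) + (η₁ (yline s) s + η₂ (yline s) s
            + starRingEnd ℂ (η₁ (yline s) s)))
        + C₂ * Complex.exp (-(Complex.I * ((η1I s:ℝ):ℂ)) + (η₁ (yline s) s + η₂ (yline s) s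
            + starRingEnd ℂ (η₂ (yline s) s))) := by
      intro s
      rw [hg]
      simp only [Complex.exp_add]
      ring
    have ht1 : ∀ s, Complex.exp (-(Complex.I * ((η1I s:ℝ):ℂ)) + η₁ (yline s) s)
        = ((Real.exp ξ : ℝ):ℂ) := by
      intro s
      rw [hη1line s, show -(Complex.I * ((η1I s :ℝ):ℂ)) + ((ξ:ℂ) + Complex.I * ((η1I s:ℝ):ℂ))
        = ((ξ:ℝ):ℂ) by ring, ← Complex.ofReal_exp]
    have h1 : Tendsto (fun s => a * Complex.exp (-(Complex.I * ((η1I s:ℝ):ℂ)) + η₁ (yline s) s))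
        atTop (nhds (a * ((Real.exp ξ:ℝ):ℂ))) :=
      tendsto_const_nhds.congr fun s => by rw [ht1 s]
    have h2 := (ccsp_aux_vanish hg2re).const_mul b
    have h3 := (ccsp_aux_vanish hg3re).const_mul C₁
    have h4 := (ccsp_aux_vanish hg4re).const_mul C₂
    have hsum := ((h1.add h2).add h3).add h4
    rw [mul_zero, mul_zero, mul_zero, add_zero, add_zero, add_zero] at hsum
    have hN : Tendsto (fun s => Complex.exp (-(Complex.I * ((η1I s:ℝ):ℂ))) * g (yline s) s)
        atTop (nhds (a * ((Real.exp ξ:ℝ):ℂ))) :=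
      hsum.congr fun s => (hgs s).symm
    have hdiv := hN.div hF hFLne
    have hfun : (fun s => Complex.exp (-(Complex.I * ((η1I s:ℝ):ℂ)))
          * (g (yline s) s / f (yline s) s))
        = fun s => (Complex.exp (-(Complex.I * ((η1I s:ℝ):ℂ))) * g (yline s) s) / f (yline s) s :=
      funext fun s => (mul_div_assoc _ _ _).symm
    rw [hfun]
    have hval : a * ((Real.exp ξ:ℝ):ℂ)
          / (((1 + (((‖α₁c₁‖)^2 + (‖α₁c₂‖)^2)
            * (p1R^2+p1I^2)^2 / (16*p1R^2)) * Real.exp (2*ξ) : ℝ)):ℂ)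
        = (a / ((Real.sqrt ((‖α₁c₁‖)^2 + (‖α₁c₂‖)^2) : ℝ) : ℂ))
          * ((2 * p1R / (p1R^2 + p1I^2) : ℝ) : ℂ) * ((sech (ξ + r11 / 2) : ℝ) : ℂ) := by
      have hcast : ((Real.exp ξ : ℝ):ℂ) / (((1 + (((‖α₁c₁‖)^2 + (‖α₁c₂‖)^2)
            * (p1R^2+p1I^2)^2 / (16*p1R^2)) * Real.exp (2*ξ) : ℝ)):ℂ)
          = ((Real.exp ξ / (1 + (((‖α₁c₁‖)^2 + (‖α₁c₂‖)^2)
            * (p1R^2+p1I^2)^2 / (16*p1R^2)) * Real.exp (2*ξ)) : ℝ):ℂ) := by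
        push_cast
        ring
      calc a * ((Real.exp ξ:ℝ):ℂ) / _
          = a * (((Real.exp ξ:ℝ):ℂ) / _) := by rw [mul_div_assoc]
        _ = a * ((Real.exp ξ / (1 + (((‖α₁c₁‖)^2 + (‖α₁c₂‖)^2)
            * (p1R^2+p1I^2)^2 / (16*p1R^2)) * Real.exp (2*ξ)) : ℝ):ℂ) := by rw [hcast]
        _ = _ := by
            rw [hreal]
            push_cast
            ring
    rw [← hval]
    exact hdiv
  exact ⟨key α₁c₁ α₂c₁ _ _ g₁ hg₁, key α₁c₂ α₂c₂ _ _ g₂ hg₂⟩
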